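/- Let n ≥ 2 be an integer, let κ_1,…,κ_{n−1} be real numbers and H := Σ_α κ_α. Then (i/(2π)^n) ∫_{ℝ^{n−1}} ( ∮_{|τ−‖ξ‖|=1} e^{−τ} · (−1/2) (‖ξ‖−τ)^{−2} ( ‖ξ‖^{−2} Σ_α κ_α ξ_α^2 − H ) dτ ) dξ = ((n−2)·Γ(n−1)·ω_{n−2}/(2(2π)^{n−1}(n−1))) · H. -/

import Mathlib

open Real Complex MeasureTheory BigOperators

lemma cauchy_deriv_exp (c : ℂ) :
    (∮ z in C(c, 1), (1 / (z - c)) ^ (1 : ℕ) • (z - c)⁻¹ • Complex.exp (-z))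
      = (2 * (Real.pi : ℂ) * Complex.I) * (-Complex.exp (-c)) := by
  have hd : Differentiable ℂ (fun z : ℂ => Complex.exp (-z)) :=
    Complex.differentiable_exp.comp differentiable_neg
  have hball := hd.hasFPowerSeriesOnBall (z := c) (R := 1) one_pos
  have h1 := hball.hasFPowerSeriesAt.deriv
  have h2 : deriv (fun z : ℂ => Complex.exp (-z)) c = -Complex.exp (-c) := by
    have := ((Complex.hasDerivAt_exp (-c)).comp c (hasDerivAt_neg c)).deriv
    simpa [Function.comp_def] using this
  have h3 := cauchyPowerSeries_apply (fun z : ℂ => Complex.exp (-z)) c 1 1 1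
  rw [NNReal.coe_one] at h1
  rw [h2, h3] at h1
  have hne : (2 * (Real.pi : ℂ) * Complex.I) ≠ 0 := by
    simp [Real.pi_ne_zero, Complex.I_ne_zero, Complex.ofReal_ne_zero]
  rw [eq_comm, inv_smul_eq_iff₀ hne, smul_eq_mul] at h1
  exact h1

lemma contour_eval (c A : ℂ) :
    (∮ τ in C(c, 1), Complex.exp (-τ) * (-(1 / 2 : ℂ)) * (c - τ) ^ (-2 : ℤ) * A)
      = (Real.pi : ℂ) * Complex.I * Complex.exp (-c) * A := by
  have hfun : ∀ τ : ℂ, Complex.exp (-τ) * (-(1 / 2 : ℂ)) * (c - τ) ^ (-2 : ℤ) * A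
      = ((-(1 / 2 : ℂ)) * A) • ((1 / (τ - c)) ^ (1 : ℕ) • (τ - c)⁻¹ • Complex.exp (-τ)) := by
    intro τ
    have h : (c - τ) ^ (-2 : ℤ) = ((τ - c)⁻¹) ^ (2 : ℕ) := by
      rw [show (-2 : ℤ) = -(2 : ℕ) by norm_num, zpow_neg, zpow_natCast,
        show c - τ = -(τ - c) by ring, neg_sq, inv_pow]
    rw [h, smul_eq_mul, smul_eq_mul, smul_eq_mul]
    ring
  simp only [hfun]
  rw [circleIntegral.integral_smul, cauchy_deriv_exp, smul_eq_mul]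
  ring

variable {m : ℕ}

lemma eucl_norm_sq (ξ : EuclideanSpace ℝ (Fin m)) : ‖ξ‖ ^ 2 = ∑ i, (ξ i) ^ 2 := by
  rw [EuclideanSpace.norm_eq, Real.sq_sqrt (by positivity)]
  simp [Real.norm_eq_abs, sq_abs]

lemma exp_integrable (hm : 1 ≤ m) :
    Integrable (fun ξ : EuclideanSpace ℝ (Fin m) => Real.exp (-‖ξ‖)) := by
  have hs : (Module.finrank ℝ (EuclideanSpace ℝ (Fin m)) : ℝ) < ((m + 1 : ℕ) : ℝ) := by
    rw [finrank_euclideanSpace_fin]; exact_mod_cast Nat.lt_succ_self m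
  have hint := integrable_one_add_norm (E := EuclideanSpace ℝ (Fin m)) (μ := volume) hs
  refine ((hint.const_mul (((m + 1).factorial : ℝ) * Real.exp 1)).mono'
    (Continuous.aestronglyMeasurable (by continuity)) ?_)
  filter_upwards with ξ
  have ht : (0 : ℝ) ≤ ‖ξ‖ := norm_nonneg ξ
  have hpos : (0 : ℝ) < 1 + ‖ξ‖ := by linarith
  have hpow : (1 + ‖ξ‖) ^ (m + 1) ≤ ((m + 1).factorial : ℝ) * Real.exp (1 + ‖ξ‖) := by
    have h1 : (1 + ‖ξ‖) ^ (m + 1) / ((m + 1).factorial : ℝ) ≤ Real.exp (1 + ‖ξ‖) := by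
      refine le_trans ?_ (Real.sum_le_exp_of_nonneg (by linarith) (m + 2))
      exact Finset.single_le_sum (f := fun i => (1 + ‖ξ‖) ^ i / (i.factorial : ℝ))
        (fun i _ => by positivity) (Finset.self_mem_range_succ (m + 1))
    calc (1 + ‖ξ‖) ^ (m + 1)
        = ((m + 1).factorial : ℝ) * ((1 + ‖ξ‖) ^ (m + 1) / ((m + 1).factorial : ℝ)) := by
          field_simp
      _ ≤ ((m + 1).factorial : ℝ) * Real.exp (1 + ‖ξ‖) := by
          exact mul_le_mul_of_nonneg_left h1 (by positivity)
  have hr : (1 + ‖ξ‖) ^ (-((m + 1 : ℕ) : ℝ)) = ((1 + ‖ξ‖) ^ (m + 1))⁻¹ := by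
    rw [Real.rpow_neg hpos.le, Real.rpow_natCast]
  have hppos : (0 : ℝ) < (1 + ‖ξ‖) ^ (m + 1) := by positivity
  rw [Real.norm_eq_abs, _root_.abs_of_nonneg (Real.exp_nonneg _), hr, ← div_eq_mul_inv,
    le_div_iff₀ hppos]
  calc Real.exp (-‖ξ‖) * (1 + ‖ξ‖) ^ (m + 1)
      ≤ Real.exp (-‖ξ‖) * (((m + 1).factorial : ℝ) * Real.exp (1 + ‖ξ‖)) :=
        mul_le_mul_of_nonneg_left hpow (Real.exp_nonneg _)
    _ = ((m + 1).factorial : ℝ) * (Real.exp (-‖ξ‖) * Real.exp (1 + ‖ξ‖)) := by ring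
    _ = ((m + 1).factorial : ℝ) * Real.exp 1 := by rw [← Real.exp_add]; norm_num

lemma g_meas (α : Fin m) :
    AEStronglyMeasurable (fun ξ : EuclideanSpace ℝ (Fin m) =>
      Real.exp (-‖ξ‖) * ((‖ξ‖ ^ 2)⁻¹ * (ξ α) ^ 2)) volume := by
  apply Measurable.aestronglyMeasurable
  have h1 : Measurable (fun ξ : EuclideanSpace ℝ (Fin m) => ξ α) := by
    exact (EuclideanSpace.proj (𝕜 := ℝ) α).continuous.measurable
  fun_prop

lemma g_bound (α : Fin m) (ξ : EuclideanSpace ℝ (Fin m)) :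
    ‖Real.exp (-‖ξ‖) * ((‖ξ‖ ^ 2)⁻¹ * (ξ α) ^ 2)‖ ≤ Real.exp (-‖ξ‖) := by
  have hle : (ξ α) ^ 2 ≤ ‖ξ‖ ^ 2 := by
    rw [eucl_norm_sq]
    exact Finset.single_le_sum (f := fun i => (ξ i) ^ 2) (fun i _ => sq_nonneg _)
      (Finset.mem_univ α)
  have hfrac : (‖ξ‖ ^ 2)⁻¹ * (ξ α) ^ 2 ≤ 1 := by
    rcases eq_or_ne ξ 0 with rfl | hξ
    · simp
    · have h2 : (0 : ℝ) < ‖ξ‖ ^ 2 := pow_pos (norm_pos_iff.2 hξ) 2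
      rw [inv_mul_le_iff₀ h2]
      simpa using hle
  have h0 : (0 : ℝ) ≤ (‖ξ‖ ^ 2)⁻¹ * (ξ α) ^ 2 := by positivity
  rw [Real.norm_eq_abs, _root_.abs_of_nonneg (by positivity)]
  calc Real.exp (-‖ξ‖) * ((‖ξ‖ ^ 2)⁻¹ * (ξ α) ^ 2) ≤ Real.exp (-‖ξ‖) * 1 :=
        mul_le_mul_of_nonneg_left hfrac (Real.exp_nonneg _)
    _ = Real.exp (-‖ξ‖) := mul_one _

lemma g_integrable (hm : 1 ≤ m) (α : Fin m) :
    Integrable (fun ξ : EuclideanSpace ℝ (Fin m) =>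
      Real.exp (-‖ξ‖) * ((‖ξ‖ ^ 2)⁻¹ * (ξ α) ^ 2)) := by
  exact (exp_integrable hm).mono' (g_meas α) (Filter.Eventually.of_forall (g_bound α))

lemma g_swap (hm : 1 ≤ m) (α β : Fin m) :
    (∫ ξ : EuclideanSpace ℝ (Fin m), Real.exp (-‖ξ‖) * ((‖ξ‖ ^ 2)⁻¹ * (ξ α) ^ 2))
      = ∫ ξ : EuclideanSpace ℝ (Fin m), Real.exp (-‖ξ‖) * ((‖ξ‖ ^ 2)⁻¹ * (ξ β) ^ 2) := by
  set T := LinearIsometryEquiv.piLpCongrLeft 2 ℝ ℝ (Equiv.swap α β) with hT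
  have hmp := T.measurePreserving
  have hcomp := hmp.integral_comp (T.toHomeomorph.measurableEmbedding)
    (fun ξ : EuclideanSpace ℝ (Fin m) => Real.exp (-‖ξ‖) * ((‖ξ‖ ^ 2)⁻¹ * (ξ α) ^ 2))
  rw [← hcomp]
  congr 1
  funext η
  have h1 : ‖T η‖ = ‖η‖ := T.norm_map η
  have h2 : (T η) α = η β := by
    rw [hT]
    simp only [LinearIsometryEquiv.piLpCongrLeft_apply, Equiv.piCongrLeft'_apply,
      Equiv.symm_swap]
    exact congrArg η (Equiv.swap_apply_left α β)
  simp only [h1, h2]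

lemma eucl_nontrivial (hm : 1 ≤ m) : Nontrivial (EuclideanSpace ℝ (Fin m)) := by
  refine ⟨EuclideanSpace.single ⟨0, hm⟩ 1, 0, fun h => ?_⟩
  have h2 := congrArg (fun v : EuclideanSpace ℝ (Fin m) => v ⟨0, hm⟩) h
  simp [EuclideanSpace.single_apply] at h2

lemma exp_integral_val (hm : 1 ≤ m) :
    (∫ ξ : EuclideanSpace ℝ (Fin m), Real.exp (-‖ξ‖))
      = m * (Real.sqrt Real.pi ^ m / Real.Gamma (m / 2 + 1)) * Real.Gamma m := by
  haveI := eucl_nontrivial hm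
  haveI : Nonempty (Fin m) := ⟨⟨0, hm⟩⟩
  have key := MeasureTheory.integral_fun_norm_addHaar
    (volume : Measure (EuclideanSpace ℝ (Fin m))) (fun r => Real.exp (-r))
  rw [key]
  have hdim : Module.finrank ℝ (EuclideanSpace ℝ (Fin m)) = m := finrank_euclideanSpace_fin
  rw [hdim]
  have hvol : ((volume (Metric.ball (0 : EuclideanSpace ℝ (Fin m)) 1)).toReal)
      = Real.sqrt Real.pi ^ m / Real.Gamma (m / 2 + 1) := by
    rw [EuclideanSpace.volume_ball]
    have hΓ : (0 : ℝ) < Real.Gamma ((Fintype.card (Fin m) : ℝ) / 2 + 1) :=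
      Real.Gamma_pos_of_pos (by positivity)
    rw [ENNReal.toReal_mul, ENNReal.toReal_pow, ENNReal.toReal_ofReal (by norm_num),
      ENNReal.toReal_ofReal (by positivity), one_pow, one_mul, Fintype.card_fin]
  rw [measureReal_def, hvol]
  have hint : (∫ y in Set.Ioi (0 : ℝ), y ^ (m - 1) • Real.exp (-y)) = Real.Gamma m := by
    rw [Real.Gamma_eq_integral (s := (m : ℝ)) (Nat.cast_pos.2 hm) ]
    refine setIntegral_congr_fun measurableSet_Ioi (fun y hy => ?_)
    rw [smul_eq_mul, mul_comm]
    congr 1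
    rw [show ((m : ℝ) - 1) = ((m - 1 : ℕ) : ℝ) by
        rw [Nat.cast_sub hm]; norm_num, Real.rpow_natCast]
  rw [hint, nsmul_eq_mul, smul_eq_mul]
  ring

lemma g_sum (hm : 1 ≤ m) :
    (∑ α : Fin m, ∫ ξ : EuclideanSpace ℝ (Fin m),
        Real.exp (-‖ξ‖) * ((‖ξ‖ ^ 2)⁻¹ * (ξ α) ^ 2))
      = ∫ ξ : EuclideanSpace ℝ (Fin m), Real.exp (-‖ξ‖) := by
  haveI := eucl_nontrivial hm
  rw [← integral_finset_sum Finset.univ (fun α _ => g_integrable hm α)]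
  refine integral_congr_ae ?_
  have h0 : ∀ᵐ ξ : EuclideanSpace ℝ (Fin m), ξ ≠ 0 := by
    refine ae_iff.mpr ?_
    simpa using measure_singleton (0 : EuclideanSpace ℝ (Fin m))
  filter_upwards [h0] with ξ hξ
  have hnorm : (‖ξ‖ : ℝ) ^ 2 ≠ 0 := pow_ne_zero 2 (norm_ne_zero_iff.2 hξ)
  calc (∑ α, Real.exp (-‖ξ‖) * ((‖ξ‖ ^ 2)⁻¹ * (ξ α) ^ 2))
      = Real.exp (-‖ξ‖) * ((‖ξ‖ ^ 2)⁻¹ * ∑ α, (ξ α) ^ 2) := by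
        rw [Finset.mul_sum, Finset.mul_sum]
    _ = Real.exp (-‖ξ‖) := by
        rw [← eucl_norm_sq, inv_mul_cancel₀ hnorm, mul_one]

lemma g_val (hm : 1 ≤ m) (α : Fin m) :
    (∫ ξ : EuclideanSpace ℝ (Fin m), Real.exp (-‖ξ‖) * ((‖ξ‖ ^ 2)⁻¹ * (ξ α) ^ 2))
      = (∫ ξ : EuclideanSpace ℝ (Fin m), Real.exp (-‖ξ‖)) / m := by
  have hall : ∀ β : Fin m, (∫ ξ : EuclideanSpace ℝ (Fin m),
      Real.exp (-‖ξ‖) * ((‖ξ‖ ^ 2)⁻¹ * (ξ β) ^ 2))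
      = ∫ ξ : EuclideanSpace ℝ (Fin m), Real.exp (-‖ξ‖) * ((‖ξ‖ ^ 2)⁻¹ * (ξ α) ^ 2) :=
    fun β => g_swap hm β α
  have hsum := g_sum hm
  rw [Finset.sum_congr rfl (fun β _ => hall β), Finset.sum_const, Finset.card_univ,
    Fintype.card_fin, nsmul_eq_mul] at hsum
  have hmne : (m : ℝ) ≠ 0 := Nat.cast_ne_zero.2 (by omega)
  field_simp [hmne] at hsum ⊢
  linarith [hsum]

lemma real_side (hm : 1 ≤ m) (κ : Fin m → ℝ) (H : ℝ) (hH : H = ∑ α, κ α) :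
    (∫ ξ : EuclideanSpace ℝ (Fin m),
        Real.exp (-‖ξ‖) * ((‖ξ‖ ^ 2)⁻¹ * (∑ α, κ α * (ξ α) ^ 2) - H))
      = H * (1 / m - 1) *
        (m * (Real.sqrt Real.pi ^ m / Real.Gamma (m / 2 + 1)) * Real.Gamma m) := by
  have hint1 : Integrable (fun ξ : EuclideanSpace ℝ (Fin m) =>
      ∑ α, κ α * (Real.exp (-‖ξ‖) * ((‖ξ‖ ^ 2)⁻¹ * (ξ α) ^ 2))) :=
    integrable_finset_sum _ fun α _ => (g_integrable hm α).const_mul (κ α)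
  have hint2 : Integrable (fun ξ : EuclideanSpace ℝ (Fin m) =>
      Real.exp (-‖ξ‖) * H) := (exp_integrable hm).mul_const H
  have heq : (fun ξ : EuclideanSpace ℝ (Fin m) =>
      Real.exp (-‖ξ‖) * ((‖ξ‖ ^ 2)⁻¹ * (∑ α, κ α * (ξ α) ^ 2) - H))
      = fun ξ => (∑ α, κ α * (Real.exp (-‖ξ‖) * ((‖ξ‖ ^ 2)⁻¹ * (ξ α) ^ 2)))
          - Real.exp (-‖ξ‖) * H := by
    funext ξ
    have h1 : (∑ α, κ α * (Real.exp (-‖ξ‖) * ((‖ξ‖ ^ 2)⁻¹ * (ξ α) ^ 2)))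
        = Real.exp (-‖ξ‖) * ((‖ξ‖ ^ 2)⁻¹ * ∑ α, κ α * (ξ α) ^ 2) := by
      rw [Finset.mul_sum, Finset.mul_sum]
      exact Finset.sum_congr rfl fun α _ => by ring
    rw [mul_sub, h1]
  rw [heq, integral_sub hint1 hint2, integral_finset_sum _
    (fun α _ => (g_integrable hm α).const_mul (κ α))]
  have h2 : ∀ α : Fin m, (∫ ξ : EuclideanSpace ℝ (Fin m),
      κ α * (Real.exp (-‖ξ‖) * ((‖ξ‖ ^ 2)⁻¹ * (ξ α) ^ 2)))
      = κ α * ((∫ ξ : EuclideanSpace ℝ (Fin m), Real.exp (-‖ξ‖)) / m) := by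
    intro α
    rw [integral_const_mul, g_val hm α]
  rw [Finset.sum_congr rfl fun α _ => h2 α, ← Finset.sum_mul, ← hH, integral_mul_const,
    exp_integral_val hm]
  have hmne : (m : ℝ) ≠ 0 := Nat.cast_ne_zero.2 (by omega)
  field_simp

lemma final_algebra (n m : ℕ) (hm : 1 ≤ m) (hnm : n = m + 1) (H : ℝ) :
    -(Real.pi * (H * (1 / m - 1) *
        (m * (Real.sqrt Real.pi ^ m / Real.Gamma (m / 2 + 1)) * Real.Gamma m)))
      / (2 * Real.pi) ^ n
    = ((n : ℝ) - 2) * Real.Gamma ((n : ℝ) - 1) *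
        (2 * Real.pi ^ (((n : ℝ) - 1) / 2) / Real.Gamma (((n : ℝ) - 1) / 2)) /
        (2 * (2 * Real.pi) ^ (n - 1) * ((n : ℝ) - 1)) * H := by
  subst hnm
  have hm0 : (0 : ℝ) < m := by exact_mod_cast hm
  have harg : ((m + 1 : ℕ) : ℝ) - 1 = (m : ℝ) := by push_cast; ring
  rw [harg, Nat.add_sub_cancel]
  have hs : Real.sqrt Real.pi ^ m = Real.pi ^ ((m : ℝ) / 2) := by
    rw [Real.sqrt_eq_rpow, ← Real.rpow_natCast (Real.pi ^ ((1:ℝ)/2)) m,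
      ← Real.rpow_mul Real.pi_pos.le]
    norm_num
    ring_nf
  have hΓ1 : Real.Gamma ((m : ℝ) / 2 + 1) = ((m : ℝ) / 2) * Real.Gamma ((m : ℝ) / 2) :=
    Real.Gamma_add_one (by positivity)
  have hΓ2 : Real.Gamma ((m : ℝ) / 2) ≠ 0 := (Real.Gamma_pos_of_pos (by positivity)).ne'
  have hpow : (0 : ℝ) < (2 * Real.pi) ^ m := by positivity
  rw [hs, hΓ1, pow_succ]
  push_cast
  field_simp
  ring

/-- Step 2 of the proof of Theorem 1.1: the heat-trace coefficient
`a_1(x) = (i/(2π)^n) ∫ ∮ e^{−τ}·(−1/2)(‖ξ‖−τ)^{−2}(‖ξ‖^{−2}Σκ_αξ_α² − H) dτ dξ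
        = (n−2)Γ(n−1)·ω_{n−2}·H/(2(2π)^{n−1}(n−1))`,
where `H = Σ_α κ_α` and `ω_{n−2} = 2π^{(n−1)/2}/Γ((n−1)/2)`. -/
theorem heat_trace_coefficient_a1 (n : ℕ) (hn : 2 ≤ n) (κ : Fin (n - 1) → ℝ)
    (H : ℝ) (hH : H = ∑ α, κ α) :
    (Complex.I / (2 * (Real.pi : ℂ)) ^ n) *
      (∫ ξ : EuclideanSpace ℝ (Fin (n - 1)),
        ∮ τ in C((‖ξ‖ : ℂ), 1),
          Complex.exp (-τ) * (-(1 / 2 : ℂ)) * ((‖ξ‖ : ℂ) - τ) ^ (-2 : ℤ) *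
            ((‖ξ‖ : ℂ) ^ (-2 : ℤ) * (∑ α, (κ α : ℂ) * (ξ α : ℂ) ^ 2) - (H : ℂ)))
    = (((n : ℝ) - 2) * Real.Gamma ((n : ℝ) - 1) *
          (2 * Real.pi ^ (((n : ℝ) - 1) / 2) / Real.Gamma (((n : ℝ) - 1) / 2)) /
          (2 * (2 * Real.pi) ^ (n - 1) * ((n : ℝ) - 1)) * H : ℝ) := by
  have hm : 1 ≤ n - 1 := by omega
  have hnm : n = (n - 1) + 1 := by omega
  have hinner : ∀ ξ : EuclideanSpace ℝ (Fin (n - 1)),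
      (∮ τ in C((‖ξ‖ : ℂ), 1),
        Complex.exp (-τ) * (-(1 / 2 : ℂ)) * ((‖ξ‖ : ℂ) - τ) ^ (-2 : ℤ) *
          ((‖ξ‖ : ℂ) ^ (-2 : ℤ) * (∑ α, (κ α : ℂ) * (ξ α : ℂ) ^ 2) - (H : ℂ)))
      = ((Real.pi : ℂ) * Complex.I) *
          (((Real.exp (-‖ξ‖) * ((‖ξ‖ ^ 2)⁻¹ * (∑ α, κ α * (ξ α) ^ 2) - H)) : ℝ) : ℂ) := by
    intro ξ
    rw [contour_eval]
    have hz : ((‖ξ‖ : ℂ)) ^ (-2 : ℤ) = (((‖ξ‖ ^ 2)⁻¹ : ℝ) : ℂ) := by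
      rw [show (-2 : ℤ) = -(2 : ℕ) by norm_num, zpow_neg, zpow_natCast]
      push_cast
      ring
    rw [hz]
    push_cast
    ring
  simp only [hinner]
  have hio : (∫ ξ : EuclideanSpace ℝ (Fin (n - 1)),
      ((Real.exp (-‖ξ‖) * ((‖ξ‖ ^ 2)⁻¹ * (∑ α, κ α * (ξ α) ^ 2) - H) : ℝ) : ℂ))
      = (((∫ ξ : EuclideanSpace ℝ (Fin (n - 1)),
          Real.exp (-‖ξ‖) * ((‖ξ‖ ^ 2)⁻¹ * (∑ α, κ α * (ξ α) ^ 2) - H)) : ℝ) : ℂ) :=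
    integral_ofReal
  rw [integral_const_mul, hio, real_side hm κ H hH]
  set T : ℝ := H * (1 / (n - 1 : ℕ) - 1) *
    ((n - 1 : ℕ) * (Real.sqrt Real.pi ^ (n - 1 : ℕ) / Real.Gamma ((n - 1 : ℕ) / 2 + 1)) *
      Real.Gamma (n - 1 : ℕ)) with hT
  have hstep : (Complex.I / (2 * (Real.pi : ℂ)) ^ n) * (((Real.pi : ℂ) * Complex.I) * (T : ℂ))
      = ((-(Real.pi * T) / (2 * Real.pi) ^ n : ℝ) : ℂ) := by
    have hne : ((2 : ℂ) * (Real.pi : ℂ)) ^ n ≠ 0 := by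
      apply pow_ne_zero
      simp [Real.pi_ne_zero, Complex.ofReal_ne_zero]
    calc (Complex.I / (2 * (Real.pi : ℂ)) ^ n) * (((Real.pi : ℂ) * Complex.I) * (T : ℂ))
        = (Complex.I * Complex.I) * ((Real.pi : ℂ) * (T : ℂ)) / (2 * (Real.pi : ℂ)) ^ n := by
          ring
      _ = -((Real.pi : ℂ) * (T : ℂ)) / (2 * (Real.pi : ℂ)) ^ n := by
          rw [Complex.I_mul_I]; ring
      _ = ((-(Real.pi * T) / (2 * Real.pi) ^ n : ℝ) : ℂ) := by push_cast; ring
  rw [hstep]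
  rw [hT]
  exact Complex.ofReal_inj.2 (by
    have := final_algebra n (n - 1) hm hnm H
    simpa using this)
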